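/- arXiv:1806.06582 — 3 statements merged into one kernel-verified Lean document; each statement's English description precedes it below -/
import Mathlib

section
/- Let β ∈ (−π/2, π/2) and ρ₀, ρ₁ > 0. Then k_ℍ(ρ₀, ρ₁·e^{iβ}) − k_ℍ(ρ₀, ρ₁) ≥ (1/2)·log(1/cos β), where k_ℍ denotes the hyperbolic distance in the right half-plane ℍ. -/
open Complex Set Real

/-- The hyperbolic (Poincaré) distance on the right half-plane
`ℍ = {z : 0 < Re z}`, given by the explicit formula
`k_ℍ(z,w) = (1/2)·log((1+|(z−w)/(z+conj w)|)/(1−|(z−w)/(z+conj w)|))`. -/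
noncomputable def kH (z w : ℂ) : ℝ :=
  Real.log ((1 + ‖(z - w) / (z + (starRingEnd ℂ) w)‖) /
    (1 - ‖(z - w) / (z + (starRingEnd ℂ) w)‖)) / 2

lemma kH_val (ρ₀ ρ₁ β : ℝ) (h0 : 0 < ρ₀) (h1 : 0 < ρ₁) (hc : 0 < Real.cos β) :
    kH (ρ₀ : ℂ) ((ρ₁ : ℂ) * Complex.exp (β * Complex.I)) =
      Real.log ((Real.sqrt (ρ₀^2+ρ₁^2 + 2*ρ₀*ρ₁*Real.cos β) +
        Real.sqrt (ρ₀^2+ρ₁^2 - 2*ρ₀*ρ₁*Real.cos β))^2 / (4*ρ₀*ρ₁*Real.cos β)) / 2 := by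
  set c := Real.cos β with hcdef
  have hc1 : c ≤ 1 := Real.cos_le_one β
  have hb2 : 0 ≤ ρ₀^2+ρ₁^2 - 2*ρ₀*ρ₁*c := by nlinarith [sq_nonneg (ρ₀-ρ₁), mul_pos h0 h1]
  have ha2 : 0 < ρ₀^2+ρ₁^2 + 2*ρ₀*ρ₁*c := by nlinarith [sq_nonneg ρ₀, sq_nonneg ρ₁, mul_pos (mul_pos h0 h1) hc]
  set a := Real.sqrt (ρ₀^2+ρ₁^2 + 2*ρ₀*ρ₁*c) with hadef
  set b := Real.sqrt (ρ₀^2+ρ₁^2 - 2*ρ₀*ρ₁*c) with hbdef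
  have habs1 : ‖(ρ₀:ℂ) - ρ₁ * Complex.exp (β * Complex.I)‖ = b := by
    rw [Complex.norm_def, Complex.normSq_apply]
    have hre : ((ρ₀:ℂ) - ρ₁ * Complex.exp (β * Complex.I)).re = ρ₀ - ρ₁ * Real.cos β := by
      simp [Complex.exp_ofReal_mul_I_re]
    have him : ((ρ₀:ℂ) - ρ₁ * Complex.exp (β * Complex.I)).im = -(ρ₁ * Real.sin β) := by
      simp [Complex.exp_ofReal_mul_I_im]
    rw [hre, him, hbdef]
    congr 1
    nlinarith [Real.sin_sq_add_cos_sq β]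
  have habs2 : ‖(ρ₀:ℂ) + (starRingEnd ℂ) ((ρ₁:ℂ) * Complex.exp (β * Complex.I))‖ = a := by
    rw [Complex.norm_def, Complex.normSq_apply]
    have hre : ((ρ₀:ℂ) + (starRingEnd ℂ) ((ρ₁:ℂ) * Complex.exp (β * Complex.I))).re
        = ρ₀ + ρ₁ * Real.cos β := by
      simp [Complex.exp_ofReal_mul_I_re]
    have him : ((ρ₀:ℂ) + (starRingEnd ℂ) ((ρ₁:ℂ) * Complex.exp (β * Complex.I))).im
        = -(ρ₁ * Real.sin β) := by
      simp [Complex.exp_ofReal_mul_I_im]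
    rw [hre, him, hadef]
    congr 1
    nlinarith [Real.sin_sq_add_cos_sq β]
  have ha : 0 < a := Real.sqrt_pos.mpr ha2
  have hb : 0 ≤ b := Real.sqrt_nonneg _
  have haa : a^2 = ρ₀^2+ρ₁^2 + 2*ρ₀*ρ₁*c := Real.sq_sqrt ha2.le
  have hbb : b^2 = ρ₀^2+ρ₁^2 - 2*ρ₀*ρ₁*c := Real.sq_sqrt hb2
  have hba : b < a := by
    rw [hbdef, hadef]
    apply Real.sqrt_lt_sqrt hb2
    nlinarith [mul_pos (mul_pos h0 h1) hc]
  unfold kH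
  rw [norm_div, habs1, habs2]
  congr 1
  have h1 : (1 + b / a) / (1 - b / a) = (a + b)^2 / (4*ρ₀*ρ₁*c) := by
    rw [div_eq_div_iff]
    · field_simp
      nlinarith
    · have : 0 < 1 - b / a := by
        rw [sub_pos, div_lt_one ha]; exact hba
      linarith
    · positivity
  rw [h1]
theorem stmt_2 (β ρ₀ ρ₁ : ℝ) (hβ : β ∈ Set.Ioo (-(π/2)) (π/2))
    (h0 : 0 < ρ₀) (h1 : 0 < ρ₁) :
    Real.log (1 / Real.cos β) / 2 ≤
      kH (ρ₀ : ℂ) ((ρ₁ : ℂ) * Complex.exp (β * Complex.I)) - kH (ρ₀ : ℂ) (ρ₁ : ℂ) := by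
  have hc : 0 < Real.cos β := Real.cos_pos_of_mem_Ioo hβ
  set c := Real.cos β with hcdef
  have hc1 : c ≤ 1 := Real.cos_le_one β
  have hkβ := kH_val ρ₀ ρ₁ β h0 h1 hc
  have hk0' := kH_val ρ₀ ρ₁ 0 h0 h1 (by simp)
  have hk0 : kH (ρ₀ : ℂ) (ρ₁ : ℂ) =
      Real.log ((Real.sqrt (ρ₀^2+ρ₁^2 + 2*ρ₀*ρ₁) + Real.sqrt (ρ₀^2+ρ₁^2 - 2*ρ₀*ρ₁))^2
        / (4*ρ₀*ρ₁)) / 2 := by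
    simpa using hk0'
  rw [hkβ, hk0]
  set A := Real.sqrt (ρ₀^2+ρ₁^2 + 2*ρ₀*ρ₁*c) + Real.sqrt (ρ₀^2+ρ₁^2 - 2*ρ₀*ρ₁*c) with hA
  set A₀ := Real.sqrt (ρ₀^2+ρ₁^2 + 2*ρ₀*ρ₁) + Real.sqrt (ρ₀^2+ρ₁^2 - 2*ρ₀*ρ₁) with hA0
  have hb2 : 0 ≤ ρ₀^2+ρ₁^2 - 2*ρ₀*ρ₁*c := by nlinarith [sq_nonneg (ρ₀-ρ₁), mul_pos h0 h1]
  have hb02 : 0 ≤ ρ₀^2+ρ₁^2 - 2*ρ₀*ρ₁ := by nlinarith [sq_nonneg (ρ₀-ρ₁)]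
  have ha2 : (0:ℝ) ≤ ρ₀^2+ρ₁^2 + 2*ρ₀*ρ₁ := by positivity
  have ha2c : (0:ℝ) ≤ ρ₀^2+ρ₁^2 + 2*ρ₀*ρ₁*c := by positivity
  have hApos : 0 < A := by
    have : 0 < Real.sqrt (ρ₀^2+ρ₁^2 + 2*ρ₀*ρ₁*c) := Real.sqrt_pos.mpr (by positivity)
    have := Real.sqrt_nonneg (ρ₀^2+ρ₁^2 - 2*ρ₀*ρ₁*c)
    rw [hA]; linarith
  have hA0pos : 0 < A₀ := by
    have : 0 < Real.sqrt (ρ₀^2+ρ₁^2 + 2*ρ₀*ρ₁) := Real.sqrt_pos.mpr (by positivity)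
    have := Real.sqrt_nonneg (ρ₀^2+ρ₁^2 - 2*ρ₀*ρ₁)
    rw [hA0]; linarith
  have hAsq : A^2 = 2*(ρ₀^2+ρ₁^2) +
      2*Real.sqrt ((ρ₀^2+ρ₁^2 + 2*ρ₀*ρ₁*c) * (ρ₀^2+ρ₁^2 - 2*ρ₀*ρ₁*c)) := by
    rw [hA, add_sq, Real.sq_sqrt ha2c, Real.sq_sqrt hb2, Real.sqrt_mul ha2c]
    ring
  have hA0sq : A₀^2 = 2*(ρ₀^2+ρ₁^2) +
      2*Real.sqrt ((ρ₀^2+ρ₁^2 + 2*ρ₀*ρ₁) * (ρ₀^2+ρ₁^2 - 2*ρ₀*ρ₁)) := by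
    rw [hA0, add_sq, Real.sq_sqrt ha2, Real.sq_sqrt hb02, Real.sqrt_mul ha2]
    ring
  have hsqle : A₀^2 ≤ A^2 := by
    rw [hAsq, hA0sq]
    have : (ρ₀^2+ρ₁^2 + 2*ρ₀*ρ₁) * (ρ₀^2+ρ₁^2 - 2*ρ₀*ρ₁) ≤
        (ρ₀^2+ρ₁^2 + 2*ρ₀*ρ₁*c) * (ρ₀^2+ρ₁^2 - 2*ρ₀*ρ₁*c) := by
      have hcc : c^2 ≤ 1 := by nlinarith
      nlinarith [mul_nonneg (sq_nonneg (ρ₀*ρ₁)) (sub_nonneg.mpr hcc)]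
    linarith [Real.sqrt_le_sqrt this]
  have hlog : Real.log (A₀^2) ≤ Real.log (A^2) :=
    Real.log_le_log (by positivity) hsqle
  have e1 : Real.log (A^2/(4*ρ₀*ρ₁*c)) = Real.log (A^2) - Real.log (4*ρ₀*ρ₁) - Real.log c := by
    rw [Real.log_div (by positivity) (by positivity), Real.log_mul (by positivity) (ne_of_gt hc)]
    ring
  have e2 : Real.log (A₀^2/(4*ρ₀*ρ₁)) = Real.log (A₀^2) - Real.log (4*ρ₀*ρ₁) := by
    rw [Real.log_div (by positivity) (by positivity)]
  have e3 : Real.log (1/c) = -Real.log c := by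
    rw [one_div, Real.log_inv]
  rw [e1, e2, e3]
  linarith
end

section
/- Let ρ₀ > 0 and α, β ∈ (−π/2, π/2). The function ρ ↦ k_ℍ(ρ·e^{iα}, ρ₀·e^{iβ}) on (0,∞) attains its minimum at ρ = ρ₀, is increasing for ρ > ρ₀ and decreasing for ρ < ρ₀. -/
open Complex Set Real

lemma mynormSq_sub (ρ ρ₀ α β : ℝ) :
    Complex.normSq ((ρ:ℂ)*Complex.exp (α*Complex.I) - (ρ₀:ℂ)*Complex.exp (β*Complex.I)) =
      ρ^2 + ρ₀^2 - 2*ρ*ρ₀*(Real.cos α*Real.cos β + Real.sin α*Real.sin β) := by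
  simp [Complex.normSq_apply, Complex.exp_ofReal_mul_I_re, Complex.exp_ofReal_mul_I_im]
  nlinarith [Real.sin_sq_add_cos_sq α, Real.sin_sq_add_cos_sq β]

lemma normSq_addc (ρ ρ₀ α β : ℝ) :
    Complex.normSq ((ρ:ℂ)*Complex.exp (α*Complex.I) + (starRingEnd ℂ) ((ρ₀:ℂ)*Complex.exp (β*Complex.I))) =
      ρ^2 + ρ₀^2 + 2*ρ*ρ₀*(Real.cos α*Real.cos β - Real.sin α*Real.sin β) := by
  simp [Complex.normSq_apply, Complex.exp_ofReal_mul_I_re, Complex.exp_ofReal_mul_I_im]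
  nlinarith [Real.sin_sq_add_cos_sq α, Real.sin_sq_add_cos_sq β]

lemma myabs_eq (ρ ρ₀ α β : ℝ) (hρ : 0 < ρ) (hρ₀ : 0 < ρ₀)
    (hab : -1 < Real.cos α*Real.cos β - Real.sin α*Real.sin β) :
    ‖((ρ:ℂ)*Complex.exp (α*Complex.I) - (ρ₀:ℂ)*Complex.exp (β*Complex.I)) /
        ((ρ:ℂ)*Complex.exp (α*Complex.I) + (starRingEnd ℂ) ((ρ₀:ℂ)*Complex.exp (β*Complex.I)))‖ =
      Real.sqrt (((ρ/ρ₀ + ρ₀/ρ) - 2*(Real.cos α*Real.cos β + Real.sin α*Real.sin β)) /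
        ((ρ/ρ₀ + ρ₀/ρ) + 2*(Real.cos α*Real.cos β - Real.sin α*Real.sin β))) := by
  set a := Real.cos α*Real.cos β + Real.sin α*Real.sin β
  set b := Real.cos α*Real.cos β - Real.sin α*Real.sin β
  have hD : (0:ℝ) < ρ^2 + ρ₀^2 + 2*ρ*ρ₀*b := by
    nlinarith [sq_nonneg (ρ - ρ₀), mul_pos hρ hρ₀]
  rw [Complex.norm_def, map_div₀ Complex.normSq, mynormSq_sub, normSq_addc]
  congr 1
  have hs2 : (0:ℝ) < ρ/ρ₀ + ρ₀/ρ + 2*b := by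
    have h : ρ/ρ₀ + ρ₀/ρ + 2*b = (ρ^2+ρ₀^2+2*ρ*ρ₀*b)/(ρ*ρ₀) := by field_simp
    rw [h]; positivity
  rw [div_eq_div_iff hD.ne' hs2.ne']
  field_simp
  ring

/-- The monotonicity core: as `s` increases (for `s ≥ 2`), so does the hyperbolic
distance expression. Here `a = cos(α−β)`, `b = cos(α+β)`. -/
lemma core {a b s₁ s₂ : ℝ} (ha : a ≤ 1) (hb : -1 < b) (hab : 0 < a + b)
    (hs1 : 2 ≤ s₁) (h12 : s₁ < s₂) :
    Real.log ((1 + Real.sqrt ((s₁ - 2*a)/(s₁ + 2*b))) /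
        (1 - Real.sqrt ((s₁ - 2*a)/(s₁ + 2*b)))) / 2 <
    Real.log ((1 + Real.sqrt ((s₂ - 2*a)/(s₂ + 2*b))) /
        (1 - Real.sqrt ((s₂ - 2*a)/(s₂ + 2*b)))) / 2 := by
  have hd1 : (0:ℝ) < s₁ + 2*b := by linarith
  have hd2 : (0:ℝ) < s₂ + 2*b := by linarith
  set r₁ := (s₁ - 2*a)/(s₁ + 2*b) with hr₁
  set r₂ := (s₂ - 2*a)/(s₂ + 2*b) with hr₂
  have hr1 : 0 ≤ r₁ := div_nonneg (by linarith) hd1.le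
  have hr12 : r₁ < r₂ := by rw [hr₁, hr₂, div_lt_div_iff₀ hd1 hd2]; nlinarith
  have hr2 : r₂ < 1 := by rw [hr₂, div_lt_one hd2]; linarith
  set t₁ := Real.sqrt r₁
  set t₂ := Real.sqrt r₂
  have ht1 : 0 ≤ t₁ := Real.sqrt_nonneg _
  have ht12 : t₁ < t₂ := Real.sqrt_lt_sqrt hr1 hr12
  have ht2 : t₂ < 1 := by
    rw [show (1:ℝ) = Real.sqrt 1 from (Real.sqrt_one).symm]
    exact Real.sqrt_lt_sqrt (hr1.trans hr12.le) hr2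
  have h1t1 : (0:ℝ) < 1 - t₁ := by linarith
  have h1t2 : (0:ℝ) < 1 - t₂ := by linarith
  have hA : (1 + t₁)/(1 - t₁) < (1 + t₂)/(1 - t₂) := by
    rw [div_lt_div_iff₀ h1t1 h1t2]; nlinarith
  have hApos : (0:ℝ) < (1 + t₁)/(1 - t₁) := by positivity
  have := Real.log_lt_log hApos hA
  linarith

lemma kH_lt (ρ₀ α β : ℝ) (hρ₀ : 0 < ρ₀)
    (hα : α ∈ Set.Ioo (-(π/2)) (π/2)) (hβ : β ∈ Set.Ioo (-(π/2)) (π/2))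
    {ρ₁ ρ₂ : ℝ} (h1 : 0 < ρ₁) (h2 : 0 < ρ₂)
    (hs : ρ₁/ρ₀ + ρ₀/ρ₁ < ρ₂/ρ₀ + ρ₀/ρ₂) :
    kH ((ρ₁ : ℂ) * Complex.exp (α * Complex.I)) ((ρ₀ : ℂ) * Complex.exp (β * Complex.I)) <
    kH ((ρ₂ : ℂ) * Complex.exp (α * Complex.I)) ((ρ₀ : ℂ) * Complex.exp (β * Complex.I)) := by
  have hcα : 0 < Real.cos α := Real.cos_pos_of_mem_Ioo hα
  have hcβ : 0 < Real.cos β := Real.cos_pos_of_mem_Ioo hβ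
  have hbgt : -1 < Real.cos α*Real.cos β - Real.sin α*Real.sin β := by
    have hcc : 0 < Real.cos ((α+β)/2) := by
      apply Real.cos_pos_of_mem_Ioo
      constructor <;> [linarith [hα.1, hβ.1]; linarith [hα.2, hβ.2]]
    have hh := Real.cos_sq ((α+β)/2)
    rw [show 2*((α+β)/2) = α+β by ring] at hh
    have hadd := Real.cos_add α β
    nlinarith
  have hale : Real.cos α*Real.cos β + Real.sin α*Real.sin β ≤ 1 := by
    rw [← Real.cos_sub]; exact Real.cos_le_one _
  have habpos : 0 < (Real.cos α*Real.cos β + Real.sin α*Real.sin β) +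
      (Real.cos α*Real.cos β - Real.sin α*Real.sin β) := by nlinarith
  have hs1 : 2 ≤ ρ₁/ρ₀ + ρ₀/ρ₁ := by
    rw [div_add_div _ _ hρ₀.ne' h1.ne', le_div_iff₀ (by positivity)]
    nlinarith [sq_nonneg (ρ₁ - ρ₀)]
  unfold kH
  rw [myabs_eq ρ₁ ρ₀ α β h1 hρ₀ hbgt, myabs_eq ρ₂ ρ₀ α β h2 hρ₀ hbgt]
  exact core hale hbgt habpos hs1 hs

theorem stmt_3 (ρ₀ α β : ℝ) (hρ₀ : 0 < ρ₀)
    (hα : α ∈ Set.Ioo (-(π/2)) (π/2)) (hβ : β ∈ Set.Ioo (-(π/2)) (π/2)) :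
    (∀ ρ ∈ Set.Ioi (0:ℝ),
        kH ((ρ₀ : ℂ) * Complex.exp (α * Complex.I)) ((ρ₀ : ℂ) * Complex.exp (β * Complex.I)) ≤
          kH ((ρ : ℂ) * Complex.exp (α * Complex.I)) ((ρ₀ : ℂ) * Complex.exp (β * Complex.I))) ∧
    StrictMonoOn
      (fun ρ : ℝ => kH ((ρ : ℂ) * Complex.exp (α * Complex.I))
        ((ρ₀ : ℂ) * Complex.exp (β * Complex.I))) (Set.Ici ρ₀) ∧
    StrictAntiOn
      (fun ρ : ℝ => kH ((ρ : ℂ) * Complex.exp (α * Complex.I))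
        ((ρ₀ : ℂ) * Complex.exp (β * Complex.I))) (Set.Ioc (0:ℝ) ρ₀) := by
  have slt : ∀ x y : ℝ, 0 < x → 0 < y → 0 < (y - x)*(x*y - ρ₀^2) →
      x/ρ₀ + ρ₀/x < y/ρ₀ + ρ₀/y := by
    intro x y hx hy hkey
    rw [div_add_div _ _ hρ₀.ne' hx.ne', div_add_div _ _ hρ₀.ne' hy.ne',
      div_lt_div_iff₀ (by positivity) (by positivity)]
    nlinarith [mul_pos hρ₀ hkey]
  refine ⟨?_, ?_, ?_⟩
  · intro ρ hρ
    simp only [Set.mem_Ioi] at hρ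
    rcases eq_or_ne ρ ρ₀ with h | h
    · exact le_of_eq (by rw [h])
    · refine le_of_lt (kH_lt ρ₀ α β hρ₀ hα hβ hρ₀ hρ (slt ρ₀ ρ hρ₀ hρ ?_))
      rcases lt_or_gt_of_ne h with hlt | hgt
      · nlinarith [mul_pos (sub_pos.2 hlt) (mul_pos hρ₀ (sub_pos.2 hlt))]
      · nlinarith [mul_pos (sub_pos.2 hgt) (mul_pos hρ₀ (sub_pos.2 hgt))]
  · intro x hx y hy hxy
    simp only [Set.mem_Ici] at hx hy
    have hx0 : 0 < x := lt_of_lt_of_le hρ₀ hx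
    have hy0 : 0 < y := lt_of_lt_of_le hρ₀ hy
    refine kH_lt ρ₀ α β hρ₀ hα hβ hx0 hy0 (slt x y hx0 hy0 ?_)
    have : ρ₀^2 < x*y := by nlinarith
    nlinarith [mul_pos (sub_pos.2 hxy) (sub_pos.2 this)]
  · intro x hx y hy hxy
    refine kH_lt ρ₀ α β hρ₀ hα hβ hy.1 hx.1 (slt y x hy.1 hx.1 ?_)
    have : x*y < ρ₀^2 := by nlinarith [hx.1, hy.2, hxy]
    nlinarith [mul_pos (sub_pos.2 hxy) (sub_pos.2 this)]
end

section
/- Let β₀, β₁ ∈ (−π/2, π/2) and 0 < ρ₀ < ρ₁. Then k_ℍ(ρ₀·e^{iβ₀}, ρ₁·e^{iβ₁}) ≥ k_ℍ(ρ₀, ρ₁), i.e. among points at given moduli ρ₀ < ρ₁ in the half-plane, the hyperbolic distance is minimized when both lie on the positive real axis. -/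
open Complex Set Real

theorem stmt_5 (β₀ β₁ ρ₀ ρ₁ : ℝ)
    (hβ₀ : β₀ ∈ Set.Ioo (-(π/2)) (π/2)) (hβ₁ : β₁ ∈ Set.Ioo (-(π/2)) (π/2))
    (h0 : 0 < ρ₀) (h01 : ρ₀ < ρ₁) :
    kH (ρ₀ : ℂ) (ρ₁ : ℂ) ≤
      kH ((ρ₀ : ℂ) * Complex.exp (β₀ * Complex.I)) ((ρ₁ : ℂ) * Complex.exp (β₁ * Complex.I)) := by
  obtain ⟨hb0l, hb0r⟩ := hβ₀
  obtain ⟨hb1l, hb1r⟩ := hβ₁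
  have hc0 : 0 < Real.cos β₀ := Real.cos_pos_of_mem_Ioo ⟨by linarith, hb0r⟩
  have hc1 : 0 < Real.cos β₁ := Real.cos_pos_of_mem_Ioo ⟨by linarith, hb1r⟩
  have hc0' : Real.cos β₀ ≤ 1 := Real.cos_le_one _
  have hc1' : Real.cos β₁ ≤ 1 := Real.cos_le_one _
  have hs0 : Real.sin β₀ ^ 2 + Real.cos β₀ ^ 2 = 1 := Real.sin_sq_add_cos_sq _
  have hs1 : Real.sin β₁ ^ 2 + Real.cos β₁ ^ 2 = 1 := Real.sin_sq_add_cos_sq _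
  have hkey : 0 ≤ (ρ₀^2 + ρ₁^2) * (1 - Real.cos β₀ * Real.cos β₁)
      - 2 * ρ₀ * ρ₁ * (Real.sin β₀ * Real.sin β₁) := by
    have h1 : Real.cos β₀ * Real.cos β₁ + Real.sin β₀ * Real.sin β₁ ≤ 1 := by
      nlinarith [sq_nonneg (Real.sin β₀ * Real.cos β₁ - Real.cos β₀ * Real.sin β₁)]
    have h2 : Real.cos β₀ * Real.cos β₁ ≤ 1 := by nlinarith
    nlinarith [sq_nonneg (ρ₁ - ρ₀), mul_pos h0 (h0.trans h01)]
  set z : ℂ := (ρ₀ : ℂ) * Complex.exp (β₀ * Complex.I)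
  set w : ℂ := (ρ₁ : ℂ) * Complex.exp (β₁ * Complex.I)
  have hre : (z - w).re = ρ₀ * Real.cos β₀ - ρ₁ * Real.cos β₁ := by
    simp [z, w, Complex.exp_ofReal_mul_I_re, Complex.exp_ofReal_mul_I_im]
  have him : (z - w).im = ρ₀ * Real.sin β₀ - ρ₁ * Real.sin β₁ := by
    simp [z, w, Complex.exp_ofReal_mul_I_re, Complex.exp_ofReal_mul_I_im]
  have hre' : (z + (starRingEnd ℂ) w).re = ρ₀ * Real.cos β₀ + ρ₁ * Real.cos β₁ := by
    simp [z, w, Complex.exp_ofReal_mul_I_re, Complex.exp_ofReal_mul_I_im]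
  have him' : (z + (starRingEnd ℂ) w).im = ρ₀ * Real.sin β₀ - ρ₁ * Real.sin β₁ := by
    simp [z, w, Complex.exp_ofReal_mul_I_re, Complex.exp_ofReal_mul_I_im]; ring
  set A : ℝ := ‖z - w‖ with hAdef
  set B : ℝ := ‖z + (starRingEnd ℂ) w‖ with hBdef
  have hA2 : A ^ 2 = (ρ₀ * Real.cos β₀ - ρ₁ * Real.cos β₁) ^ 2
      + (ρ₀ * Real.sin β₀ - ρ₁ * Real.sin β₁) ^ 2 := by
    rw [hAdef, Complex.sq_norm, Complex.normSq_apply, hre, him]; ring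
  have hB2 : B ^ 2 = (ρ₀ * Real.cos β₀ + ρ₁ * Real.cos β₁) ^ 2
      + (ρ₀ * Real.sin β₀ - ρ₁ * Real.sin β₁) ^ 2 := by
    rw [hBdef, Complex.sq_norm, Complex.normSq_apply, hre', him']; ring
  clear_value A B
  have hAnn : 0 ≤ A := hAdef ▸ norm_nonneg _
  have hBnn : 0 ≤ B := hBdef ▸ norm_nonneg _
  have hAB : A ^ 2 < B ^ 2 := by
    rw [hA2, hB2]
    nlinarith [mul_pos (mul_pos h0 (h0.trans h01)) (mul_pos hc0 hc1)]
  have hABlt : A < B := lt_of_pow_lt_pow_left₀ 2 hBnn hAB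
  have hBpos : 0 < B := hAnn.trans_lt hABlt
  -- value of t for rotated pair
  have ht1 : ‖(z - w) / (z + (starRingEnd ℂ) w)‖ = A / B := by
    rw [norm_div, ← hAdef, ← hBdef]
  clear_value z w
  clear hre him hre' him'
  -- value of t for real pair
  have ht0 : ‖((ρ₀ : ℂ) - ρ₁) / ((ρ₀ : ℂ) + (starRingEnd ℂ) ρ₁)‖
      = (ρ₁ - ρ₀) / (ρ₁ + ρ₀) := by
    rw [Complex.conj_ofReal, ← Complex.ofReal_sub, ← Complex.ofReal_add, ← Complex.ofReal_div,
      Complex.norm_real, Real.norm_eq_abs, abs_div, abs_of_nonpos (by linarith), abs_of_pos (by linarith)]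
    ring
  -- key inequality on t's
  have hsum : 0 < ρ₁ + ρ₀ := by linarith
  have key : (ρ₁ - ρ₀) / (ρ₁ + ρ₀) ≤ A / B := by
    rw [div_le_div_iff₀ hsum hBpos]
    have hD : A^2 * (ρ₁ + ρ₀)^2 - (ρ₁ - ρ₀)^2 * B^2
        = 4 * ρ₀ * ρ₁ * ((ρ₀^2 + ρ₁^2) * (1 - Real.cos β₀ * Real.cos β₁)
          - 2 * ρ₀ * ρ₁ * (Real.sin β₀ * Real.sin β₁)) := by
      rw [hA2, hB2]
      linear_combination (4*ρ₀*ρ₁*ρ₀^2) * hs0 + (4*ρ₀*ρ₁*ρ₁^2) * hs1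
    have hKnn : 0 ≤ 4 * ρ₀ * ρ₁ * ((ρ₀^2 + ρ₁^2) * (1 - Real.cos β₀ * Real.cos β₁)
        - 2 * ρ₀ * ρ₁ * (Real.sin β₀ * Real.sin β₁)) :=
      mul_nonneg (mul_nonneg (mul_nonneg (by norm_num) h0.le) (h0.trans h01).le) hkey
    have hsq : ((ρ₁ - ρ₀) * B) ^ 2 ≤ (A * (ρ₁ + ρ₀)) ^ 2 := by
      rw [mul_pow, mul_pow]; linarith [hD, hKnn]
    have h1 : 0 ≤ (ρ₁ - ρ₀) * B := mul_nonneg (by linarith) hBnn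
    have h2 : 0 ≤ A * (ρ₁ + ρ₀) := mul_nonneg hAnn (by linarith)
    exact le_of_pow_le_pow_left₀ two_ne_zero h2 hsq
  have ht1lt : A / B < 1 := (div_lt_one hBpos).2 hABlt
  have ht0nn : 0 ≤ (ρ₁ - ρ₀) / (ρ₁ + ρ₀) := div_nonneg (by linarith) (by linarith)
  -- monotonicity
  unfold kH
  rw [ht0, ht1]
  set t₀ : ℝ := (ρ₁ - ρ₀) / (ρ₁ + ρ₀) with ht₀def
  set t₁ : ℝ := A / B with ht₁def
  clear_value t₀ t₁
  have h1t₀ : 0 < 1 - t₀ := by linarith [key.trans_lt ht1lt]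
  have h1t₁ : 0 < 1 - t₁ := by linarith
  have hfrac : (1 + t₀) / (1 - t₀) ≤ (1 + t₁) / (1 - t₁) := by
    rw [div_le_div_iff₀ h1t₀ h1t₁]; ring_nf; linarith [key]
  have hlog := Real.log_le_log (div_pos (by linarith) h1t₀) hfrac
  linarith
end
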